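/- Let H be a real inner product space, let C ⊆ H be nonempty with diameter at most D, and let F : H → ℝ be differentiable with gradient ∇F satisfying F(y) ≤ F(x) + ⟪∇F(x), y − x⟫ + (L/2)·‖y − x‖² for all x, y ∈ H, where L ≥ 0. Let T ≥ 1, let η : ℕ → ℝ with η_t ∈ [0,1] for all t, let x : ℕ → H with x₁ ∈ C, let ĝ : ℕ → H, and for each t ≥ 1 let u_t ∈ C satisfy ⟪u_t, ĝ_t⟫ ≤ ⟪v, ĝ_t⟫ for all v ∈ C, with x_{t+1} = (1 − η_t)·x_t + η_t·u_t. Then ∑_{t=1}^T η_t·𝒢(x_t) ≤ F(x₁) − F(x_{T+1}) + D·∑_{t=1}^T η_t·‖∇F(x_t) − ĝ_t‖ + (L/2)·D²·∑_{t=1}^T η_t², where 𝒢(x) := sup_{v ∈ C} ⟪v − x, −∇F(x)⟫. -/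

import Mathlib

open scoped RealInnerProductSpace

private lemma telescope_Icc {f : ℕ → ℝ} (T : ℕ) (hT : 1 ≤ T) :
    ∑ t ∈ Finset.Icc 1 T, (f t - f (t + 1)) = f 1 - f (T + 1) := by
  induction T, hT using Nat.le_induction with
  | base => simp
  | succ n hn ih =>
    rw [Finset.sum_Icc_succ_top (by omega), ih]
    ring

theorem frankWolfe_telescoped_descent
    {H : Type*} [NormedAddCommGroup H] [InnerProductSpace ℝ H]
    (C : Set H) (hCne : C.Nonempty) (D : ℝ)
    (hdiam : ∀ a ∈ C, ∀ b ∈ C, ‖a - b‖ ≤ D)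
    (F : H → ℝ) (F' : H → H) (L : ℝ) (hL : 0 ≤ L)
    (hdiff : ∀ z : H, HasFDerivAt F (innerSL ℝ (F' z)) z)
    (hsmooth : ∀ x y : H, F y ≤ F x + ⟪F' x, y - x⟫ + L / 2 * ‖y - x‖ ^ 2)
    (T : ℕ) (hT : 1 ≤ T) (η : ℕ → ℝ) (hη : ∀ t, η t ∈ Set.Icc (0 : ℝ) 1)
    (x : ℕ → H) (hx1 : x 1 ∈ C) (ghat : ℕ → H) (u : ℕ → H)
    (hu_mem : ∀ t, 1 ≤ t → u t ∈ C)
    (hu_min : ∀ t, 1 ≤ t → ∀ v ∈ C, ⟪u t, ghat t⟫ ≤ ⟪v, ghat t⟫)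
    (hxrec : ∀ t, 1 ≤ t → x (t + 1) = (1 - η t) • x t + η t • u t) :
    ∑ t ∈ Finset.Icc 1 T, η t * sSup ((fun v => ⟪v - x t, -F' (x t)⟫) '' C) ≤
      F (x 1) - F (x (T + 1))
        + D * ∑ t ∈ Finset.Icc 1 T, η t * ‖F' (x t) - ghat t‖
        + L / 2 * D ^ 2 * ∑ t ∈ Finset.Icc 1 T, (η t) ^ 2 := by
  -- x t stays within distance D of C
  have hxD : ∀ t, 1 ≤ t → ∀ v ∈ C, ‖v - x t‖ ≤ D := by
    intro t ht
    induction t, ht using Nat.le_induction with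
    | base => intro v hv; exact hdiam v hv _ hx1
    | succ n hn ih =>
      intro v hv
      have h1 : v - x (n + 1) = (1 - η n) • (v - x n) + η n • (v - u n) := by
        rw [hxrec n hn]
        have := (hη n).1
        module
      have h0 : (0:ℝ) ≤ η n := (hη n).1
      have h1n : η n ≤ 1 := (hη n).2
      calc ‖v - x (n + 1)‖ ≤ ‖(1 - η n) • (v - x n)‖ + ‖η n • (v - u n)‖ := by
            rw [h1]; exact norm_add_le _ _
        _ = (1 - η n) * ‖v - x n‖ + η n * ‖v - u n‖ := by
            rw [norm_smul, norm_smul, Real.norm_eq_abs, Real.norm_eq_abs,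
              abs_of_nonneg (by linarith), abs_of_nonneg h0]
        _ ≤ (1 - η n) * D + η n * D := by
            gcongr
            · exact ih v hv
            · exact hdiam v hv _ (hu_mem n hn)
        _ = D := by ring
  have hD : 0 ≤ D :=
    le_trans (norm_nonneg (hCne.choose - hCne.choose))
      (hdiam _ hCne.choose_spec _ hCne.choose_spec)
  -- per-step inequality
  have hstep : ∀ t ∈ Finset.Icc 1 T,
      η t * sSup ((fun v => ⟪v - x t, -F' (x t)⟫) '' C) ≤
        (F (x t) - F (x (t + 1))) + D * (η t * ‖F' (x t) - ghat t‖)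
          + L / 2 * D ^ 2 * (η t) ^ 2 := by
    intro t htmem
    have ht : 1 ≤ t := (Finset.mem_Icc.mp htmem).1
    have h0 : (0:ℝ) ≤ η t := (hη t).1
    -- gap bound
    have hgap : sSup ((fun v => ⟪v - x t, -F' (x t)⟫) '' C) ≤
        ⟪u t - x t, -F' (x t)⟫ + D * ‖F' (x t) - ghat t‖ := by
      apply csSup_le (hCne.image _)
      rintro b ⟨v, hv, rfl⟩
      have key : ⟪v - x t, -F' (x t)⟫ - ⟪u t - x t, -F' (x t)⟫ =
          ⟪v - u t, ghat t - F' (x t)⟫ + ⟪u t - v, ghat t⟫ := by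
        simp only [inner_sub_left, inner_sub_right, inner_neg_right]
        ring
      have h1 : ⟪v - u t, ghat t - F' (x t)⟫ ≤ D * ‖F' (x t) - ghat t‖ := by
        calc ⟪v - u t, ghat t - F' (x t)⟫ ≤ ‖v - u t‖ * ‖ghat t - F' (x t)‖ :=
              real_inner_le_norm _ _
          _ ≤ D * ‖F' (x t) - ghat t‖ := by
              rw [show ‖ghat t - F' (x t)‖ = ‖F' (x t) - ghat t‖ from norm_sub_rev _ _]
              exact mul_le_mul_of_nonneg_right (hdiam v hv _ (hu_mem t ht)) (norm_nonneg _)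
      have h2 : ⟪u t - v, ghat t⟫ ≤ 0 := by
        rw [inner_sub_left]
        have := hu_min t ht v hv
        linarith
      linarith
    -- smoothness bound
    have hsm := hsmooth (x t) (x (t + 1))
    have hdx : x (t + 1) - x t = η t • (u t - x t) := by
      rw [hxrec t ht]; module
    have hsm2 : η t * ⟪u t - x t, -F' (x t)⟫ ≤
        F (x t) - F (x (t + 1)) + L / 2 * (η t) ^ 2 * ‖u t - x t‖ ^ 2 := by
      rw [hdx] at hsm
      rw [real_inner_smul_right, norm_smul, Real.norm_eq_abs, abs_of_nonneg h0,
        mul_pow] at hsm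
      have : ⟪F' (x t), u t - x t⟫ = -⟪u t - x t, -F' (x t)⟫ := by
        rw [real_inner_comm, inner_neg_right]; ring
      rw [this] at hsm
      nlinarith [hsm]
    have hub : ‖u t - x t‖ ≤ D := by
      have := hxD t ht (u t) (hu_mem t ht)
      calc ‖u t - x t‖ = ‖u t - x t‖ := rfl
        _ ≤ D := this
    have hsm3 : η t * ⟪u t - x t, -F' (x t)⟫ ≤
        F (x t) - F (x (t + 1)) + L / 2 * D ^ 2 * (η t) ^ 2 := by
      have hsq : ‖u t - x t‖ ^ 2 ≤ D ^ 2 := by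
        exact pow_le_pow_left₀ (norm_nonneg _) hub 2
      have hmul : L / 2 * η t ^ 2 * ‖u t - x t‖ ^ 2 ≤ L / 2 * D ^ 2 * η t ^ 2 := by
        nlinarith [mul_le_mul_of_nonneg_left hsq
          (show (0:ℝ) ≤ L / 2 * η t ^ 2 by positivity)]
      linarith
    calc η t * sSup ((fun v => ⟪v - x t, -F' (x t)⟫) '' C)
        ≤ η t * (⟪u t - x t, -F' (x t)⟫ + D * ‖F' (x t) - ghat t‖) :=
          mul_le_mul_of_nonneg_left hgap h0
      _ = η t * ⟪u t - x t, -F' (x t)⟫ + D * (η t * ‖F' (x t) - ghat t‖) := by ring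
      _ ≤ (F (x t) - F (x (t + 1))) + D * (η t * ‖F' (x t) - ghat t‖)
            + L / 2 * D ^ 2 * (η t) ^ 2 := by linarith
  calc ∑ t ∈ Finset.Icc 1 T, η t * sSup ((fun v => ⟪v - x t, -F' (x t)⟫) '' C)
      ≤ ∑ t ∈ Finset.Icc 1 T, ((F (x t) - F (x (t + 1)))
          + D * (η t * ‖F' (x t) - ghat t‖) + L / 2 * D ^ 2 * (η t) ^ 2) :=
        Finset.sum_le_sum hstep
    _ = F (x 1) - F (x (T + 1))
        + D * ∑ t ∈ Finset.Icc 1 T, η t * ‖F' (x t) - ghat t‖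
        + L / 2 * D ^ 2 * ∑ t ∈ Finset.Icc 1 T, (η t) ^ 2 := by
        rw [Finset.sum_add_distrib, Finset.sum_add_distrib,
          telescope_Icc T hT, ← Finset.mul_sum, ← Finset.mul_sum]
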